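/- Let u_1,…,u_K be vectors in an inner product space with ∑_{ℓ=1}^K u_ℓ = 0, and let C = [c_{ℓk}] be a K×K symmetric doubly stochastic matrix such that ∑_{k,ℓ} (c_{ℓk} - 1/K)⟨u_k, u_ℓ⟩ ≤ λ ∑_k ‖u_k‖² for some λ < 1. Then ∑_{k=1}^K ∑_{ℓ=1}^K c_{ℓk} ‖u_k - u_ℓ‖² ≥ 2(1-λ) ∑_{k=1}^K ‖u_k‖². -/

import Mathlib

theorem stmt2 {E : Type*} [NormedAddCommGroup E] [InnerProductSpace ℝ E]
    (K : ℕ) (u : Fin K → E) (hsum : ∑ k, u k = 0)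
    (c : Fin K → Fin K → ℝ)
    (hnn : ∀ k l, 0 ≤ c l k) (hsymm : ∀ k l, c l k = c k l)
    (hrow : ∀ k, ∑ l, c l k = 1) (hcol : ∀ l, ∑ k, c l k = 1)
    (lam : ℝ) (hlam : lam < 1)
    (hquad : ∑ k, ∑ l, (c l k - 1 / K) * (inner ℝ (u k) (u l) : ℝ)
      ≤ lam * ∑ k, ‖u k‖ ^ 2) :
    ∑ k, ∑ l, c l k * ‖u k - u l‖ ^ 2 ≥ 2 * (1 - lam) * ∑ k, ‖u k‖ ^ 2 := by
  have h0 : ∑ k, ∑ l, (1 / (K:ℝ)) * (inner ℝ (u k) (u l) : ℝ) = 0 := by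
    have : ∀ k : Fin K, ∑ l, (inner ℝ (u k) (u l) : ℝ) = 0 := by
      intro k
      rw [← inner_sum, hsum, inner_zero_right]
    simp [← Finset.mul_sum, this]
  have hc : ∑ k, ∑ l, c l k * (inner ℝ (u k) (u l) : ℝ) ≤ lam * ∑ k, ‖u k‖ ^ 2 := by
    calc ∑ k, ∑ l, c l k * (inner ℝ (u k) (u l) : ℝ)
        = ∑ k, ∑ l, (c l k - 1 / K) * (inner ℝ (u k) (u l) : ℝ)
          + ∑ k, ∑ l, (1 / (K:ℝ)) * (inner ℝ (u k) (u l) : ℝ) := by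
          rw [← Finset.sum_add_distrib]
          congr 1; ext k
          rw [← Finset.sum_add_distrib]
          congr 1; ext l; ring
      _ ≤ lam * ∑ k, ‖u k‖ ^ 2 := by rw [h0]; simpa using hquad
  have hexp : ∑ k, ∑ l, c l k * ‖u k - u l‖ ^ 2
      = 2 * ∑ k, ‖u k‖ ^ 2 - 2 * ∑ k, ∑ l, c l k * (inner ℝ (u k) (u l) : ℝ) := by
    have hn : ∀ k l : Fin K, ‖u k - u l‖ ^ 2
        = ‖u k‖ ^ 2 + ‖u l‖ ^ 2 - 2 * (inner ℝ (u k) (u l) : ℝ) := by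
      intro k l
      rw [norm_sub_sq_real]; ring
    have h1 : ∑ k, ∑ l, c l k * ‖u k‖ ^ 2 = ∑ k, ‖u k‖ ^ 2 := by
      have : ∀ k : Fin K, ∑ l, c l k * ‖u k‖ ^ 2 = ‖u k‖ ^ 2 := by
        intro k
        rw [← Finset.sum_mul, hrow k, one_mul]
      simp [this]
    have h2 : ∑ k, ∑ l, c l k * ‖u l‖ ^ 2 = ∑ k, ‖u k‖ ^ 2 := by
      rw [Finset.sum_comm]
      congr 1; ext l
      rw [← Finset.sum_mul, hcol l, one_mul]
    calc ∑ k, ∑ l, c l k * ‖u k - u l‖ ^ 2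
        = ∑ k, ∑ l, (c l k * ‖u k‖ ^ 2 + c l k * ‖u l‖ ^ 2
            - 2 * (c l k * (inner ℝ (u k) (u l) : ℝ))) := by
          congr 1; ext k; congr 1; ext l; rw [hn k l]; ring
      _ = ∑ k, ∑ l, c l k * ‖u k‖ ^ 2 + ∑ k, ∑ l, c l k * ‖u l‖ ^ 2
            - 2 * ∑ k, ∑ l, c l k * (inner ℝ (u k) (u l) : ℝ) := by
          rw [Finset.mul_sum]
          simp only [Finset.mul_sum, Finset.sum_sub_distrib, Finset.sum_add_distrib]
      _ = 2 * ∑ k, ‖u k‖ ^ 2 - 2 * ∑ k, ∑ l, c l k * (inner ℝ (u k) (u l) : ℝ) := by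
          rw [h1, h2]; ring
  rw [hexp]
  nlinarith [hc]
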